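/- A finite (or countable) product of compact metric dynamical systems each having eventual shadowing has eventual shadowing. -/

import Mathlib

open Filter Topology

attribute [local instance] PiCountable.metricSpace

private lemma iterate_pi_apply {X : ℕ → Type*} (f : ∀ n, X n → X n)
    (z : ∀ n, X n) (i n : ℕ) :
    ((fun p m => f m (p m))^[i] z) n = (f n)^[i] (z n) := by
  induction i with
  | zero => rfl
  | succ k ih => simp [Function.iterate_succ_apply', ih]

private lemma card_mul_eps_le (c ε : ℝ) (hc : 0 ≤ c) (hε : 0 < ε) :
    c * (ε / (2 * (c + 1))) ≤ ε / 2 := by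
  rw [mul_div_assoc', div_le_div_iff₀ (by linarith) (by norm_num)]
  nlinarith

/-- a countable product of compact metric systems each having eventual
shadowing has eventual shadowing (with a compatible product metric). -/
theorem eventualShadowing_pi
    {X : ℕ → Type*} [∀ n, MetricSpace (X n)] [∀ n, CompactSpace (X n)]
    (f : ∀ n, X n → X n) (hf : ∀ n, Continuous (f n))
    (hsh : ∀ n, ∀ ε > (0:ℝ), ∃ δ > (0:ℝ), ∀ x : ℕ → X n,
      (∀ i, dist (f n (x i)) (x (i + 1)) < δ) →
      ∃ z : X n, ∃ N : ℕ, ∀ i ≥ N, dist ((f n)^[i] z) (x i) < ε) :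
    ∀ ε > (0:ℝ), ∃ δ > (0:ℝ), ∀ x : ℕ → (∀ n, X n),
      (∀ i, dist ((fun p n => f n (p n)) (x i)) (x (i + 1)) < δ) →
      ∃ z : ∀ n, X n, ∃ N : ℕ, ∀ i ≥ N,
        dist ((fun p n => f n (p n))^[i] z) (x i) < ε := by
  classical
  intro ε hε
  -- choose a finite set K of coordinates outside of which the weights sum to < ε/2
  obtain ⟨K, hK⟩ :
      ∃ K : Finset ℕ, (∑' i : { j : ℕ // j ∉ K }, (1 / 2 : ℝ) ^ (i : ℕ)) < ε / 2 :=
    ((tendsto_order.1 (tendsto_tsum_compl_atTop_zero fun i : ℕ => (1 / 2 : ℝ) ^ i)).2 _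
        (half_pos hε)).exists
  set ε' : ℝ := ε / (2 * (K.card + 1)) with hε'def
  have hε' : 0 < ε' := by positivity
  choose δf hδf hδp using fun n => hsh n ε' hε'
  set S : Finset ℝ := insert (1 : ℝ) (K.image fun n => min (δf n) ((1 / 2) ^ n)) with hS
  have hSne : S.Nonempty := ⟨1, Finset.mem_insert_self _ _⟩
  set δ : ℝ := S.min' hSne with hδdef
  have hδpos : 0 < δ := by
    apply (Finset.lt_min'_iff S hSne).2
    intro y hy
    rcases Finset.mem_insert.1 hy with h | h
    · simp [h]
    · obtain ⟨n, _, rfl⟩ := Finset.mem_image.1 h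
      exact lt_min (hδf n) (by positivity)
  refine ⟨δ, hδpos, fun x hx => ?_⟩
  have hδle : ∀ n ∈ K, δ ≤ min (δf n) ((1 / 2) ^ n) := fun n hn =>
    Finset.min'_le _ _ (Finset.mem_insert_of_mem (Finset.mem_image_of_mem _ hn))
  -- coordinate pseudo-orbits for n ∈ K
  have key : ∀ n ∈ K, ∃ z : X n, ∃ N : ℕ,
      ∀ i ≥ N, dist ((f n)^[i] z) (x i n) < ε' := by
    intro n hn
    apply hδp n (fun i => x i n)
    intro i
    have h1 : dist ((fun p m => f m (p m)) (x i)) (x (i + 1)) <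
        (1 / 2) ^ (Encodable.encode n) :=
      lt_of_lt_of_le (hx i) (le_trans (hδle n hn) (min_le_right _ _))
    have h2 := PiCountable.dist_le_dist_pi_of_dist_lt (by rwa [one_div] at h1)
    calc dist (f n (x i n)) (x (i + 1) n)
        ≤ dist ((fun p m => f m (p m)) (x i)) (x (i + 1)) := h2
      _ < δ := hx i
      _ ≤ δf n := le_trans (hδle n hn) (min_le_left _ _)
  -- choose shadowing points for coordinates in K
  set z : ∀ n, X n := fun n => if h : n ∈ K then (key n h).choose else x 0 n with hz
  set Nf : ℕ → ℕ := fun n => if h : n ∈ K then (key n h).choose_spec.choose else 0 with hNf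
  have hzN : ∀ n ∈ K, ∀ i ≥ Nf n, dist ((f n)^[i] (z n)) (x i n) < ε' := by
    intro n hn i hi
    have := (key n hn).choose_spec.choose_spec i (by simpa [hNf, hn] using hi)
    simpa [hz, hn] using this
  refine ⟨z, K.sup Nf, fun i hi => ?_⟩
  have hiN : ∀ n ∈ K, Nf n ≤ i := fun n hn => le_trans (Finset.le_sup hn) hi
  set w : ∀ n, X n := (fun p n => f n (p n))^[i] z with hw
  have hwn : ∀ n, w n = (f n)^[i] (z n) := fun n => iterate_pi_apply f z i n
  have hcoord : ∀ n ∈ K, dist (w n) (x i n) < ε' := by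
    intro n hn
    rw [hwn n]
    exact hzN n hn i (hiN n hn)
  calc
    dist w (x i) = ∑' n : ℕ, min ((1 / 2) ^ (Encodable.encode n) : ℝ) (dist (w n) (x i n)) :=
      by rw [PiCountable.dist_eq_tsum w (x i)]; simp only [one_div]
    _ = (∑ n ∈ K, min ((1 / 2) ^ (Encodable.encode n) : ℝ) (dist (w n) (x i n))) +
        ∑' n : ↑(K : Set ℕ)ᶜ, min ((1 / 2) ^ (Encodable.encode (n : ℕ)) : ℝ)
          (dist (w n) (x i n)) :=
      (Summable.sum_add_tsum_compl (by simpa only [one_div] using PiCountable.dist_summable w (x i))).symm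
    _ ≤ (∑ n ∈ K, ε') + ∑' n : ↑(K : Set ℕ)ᶜ, ((1 / 2) ^ (n : ℕ) : ℝ) := by
      refine add_le_add ?_ ?_
      · exact Finset.sum_le_sum fun n hn =>
          le_of_lt (lt_of_le_of_lt (min_le_right _ _) (hcoord n hn))
      · refine Summable.tsum_le_tsum (fun n => min_le_left _ _) ?_ ?_
        · exact Summable.subtype (f := fun n : ℕ => min ((1 / 2 : ℝ) ^ (Encodable.encode n)) (dist (w n) (x i n))) (by simpa only [one_div] using PiCountable.dist_summable w (x i)) (↑K : Set ℕ)ᶜ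
        · exact Summable.subtype summable_geometric_two_encode (↑K : Set ℕ)ᶜ
    _ < ε / 2 + ε / 2 := by
      apply add_lt_add_of_le_of_lt _ ?_
      · rw [Finset.sum_const, nsmul_eq_mul, hε'def]
        exact card_mul_eps_le _ _ (Nat.cast_nonneg _) hε
      · have : (∑' n : ↑(K : Set ℕ)ᶜ, ((1 / 2) ^ (n : ℕ) : ℝ)) =
            ∑' n : { j : ℕ // j ∉ K }, ((1 / 2) ^ (n : ℕ) : ℝ) := by
          apply tsum_congr_set_coe
          ext j
          exact Iff.rfl
        rw [this]; exact hK
    _ = ε := add_halves ε
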